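/- Let n = 2m+1 = k, t_i = i, and let p_1 ≥ p_2 ≥ … ≥ p_n > 0, and set S(p) = ∑_{j=m+1}^{2m+1} 1/p_j. Then the game has value 1/S(p): there exist a mixed searcher strategy over feasible search sets whose expected capture probability against every hiding location is at least 1/S(p), and a hider probability distribution whose expected capture probability against every feasible search set is at most 1/S(p). -/

import Mathlib

/-- The feasible pure search strategies: subsets `A` of `{1,…,n}` whose total
search time `∑_{i∈A} t_i = ∑_{i∈A} i` (search times `t_i = i`) is at most `k`. -/
def feasibleSets (n k : ℕ) : Finset (Finset ℕ) :=
  (Finset.Icc 1 n).powerset.filter (fun A => (∑ i ∈ A, i) ≤ k)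

/-- For `n = 2m+1 = k`, `t_i = i` and nonincreasing positive capture
probabilities `p`, the game has value `1/S(p)` where
`S(p) = ∑_{j=m+1}^{2m+1} 1/p_j`: there is a mixed searcher strategy over the
feasible sets guaranteeing expected capture probability at least `1/S(p)`
against every hiding location, and a hider probability distribution
guaranteeing expected capture probability at most `1/S(p)` against every
feasible search set. -/
theorem game_value (m n : ℕ) (hn : n = 2 * m + 1)
    (p : ℕ → ℝ)
    (hpos : ∀ i ∈ Finset.Icc 1 n, 0 < p i)
    (hple : ∀ i ∈ Finset.Icc 1 n, p i ≤ 1)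
    (hmono : ∀ i j : ℕ, 1 ≤ i → i ≤ j → j ≤ n → p j ≤ p i)
    (S : ℝ) (hS : S = ∑ j ∈ Finset.Icc (m + 1) n, 1 / p j) :
    (∃ x : Finset ℕ → ℝ, (∀ A, 0 ≤ x A) ∧
      (∑ A ∈ feasibleSets n n, x A = 1) ∧
      (∀ i ∈ Finset.Icc 1 n,
        1 / S ≤ (∑ A ∈ (feasibleSets n n).filter (fun A => i ∈ A), x A) * p i)) ∧
    (∃ h : ℕ → ℝ, (∀ i, 0 ≤ h i) ∧
      (∑ i ∈ Finset.Icc 1 n, h i = 1) ∧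
      (∀ A ∈ feasibleSets n n, ∑ i ∈ A, h i * p i ≤ 1 / S)) := by
  have hsub : Finset.Icc (m + 1) n ⊆ Finset.Icc 1 n := by
    intro j hj
    simp only [Finset.mem_Icc] at hj ⊢
    omega
  have hposm : ∀ j ∈ Finset.Icc (m + 1) n, 0 < p j := fun j hj => hpos j (hsub hj)
  have hS0 : 0 < S := by
    rw [hS]
    apply Finset.sum_pos
    · intro j hj
      exact div_pos one_pos (hposm j hj)
    · refine ⟨n, ?_⟩
      simp only [Finset.mem_Icc]
      omega
  have hSne : S ≠ 0 := ne_of_gt hS0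
  -- the weight function
  set c : ℕ → ℝ := fun j => S⁻¹ * (p j)⁻¹ with hc
  have hc0 : ∀ j ∈ Finset.Icc (m + 1) n, 0 ≤ c j := by
    intro j hj
    exact le_of_lt (mul_pos (inv_pos.mpr hS0) (inv_pos.mpr (hposm j hj)))
  have hcsum : ∑ j ∈ Finset.Icc (m + 1) n, c j = 1 := by
    rw [hc, ← Finset.mul_sum]
    have : ∑ j ∈ Finset.Icc (m + 1) n, (p j)⁻¹ = S := by
      rw [hS]; exact Finset.sum_congr rfl (fun j _ => by rw [one_div])
    rw [this, inv_mul_cancel₀ hSne]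
  -- the searcher's pure strategies
  set Aset : ℕ → Finset ℕ := fun j => ({j, n - j} : Finset ℕ).erase 0 with hAset
  have hmemA : ∀ j i : ℕ, i ∈ Aset j ↔ i ≠ 0 ∧ (i = j ∨ i = n - j) := by
    intro j i
    simp [hAset, Finset.mem_erase, Finset.mem_insert]
  have hAfeas : ∀ j ∈ Finset.Icc (m + 1) n, Aset j ∈ feasibleSets n n := by
    intro j hj
    simp only [Finset.mem_Icc] at hj
    rw [feasibleSets, Finset.mem_filter, Finset.mem_powerset]
    constructor
    · intro i hi
      rw [hmemA] at hi
      simp only [Finset.mem_Icc]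
      omega
    · rcases eq_or_lt_of_le hj.2 with hje | hjl
      · have : Aset j = {n} := by
          rw [hAset]
          subst hje
          ext a
          simp only [Finset.mem_erase, Finset.mem_insert, Finset.mem_singleton]
          omega
        rw [this]
        simp
      · have hne : j ≠ n - j := by omega
        have h0 : (0 : ℕ) ∉ ({j, n - j} : Finset ℕ) := by
          simp only [Finset.mem_insert, Finset.mem_singleton]
          push_neg
          omega
        have : Aset j = {j, n - j} := by rw [hAset]; exact Finset.erase_eq_of_notMem h0
        rw [this, Finset.sum_pair hne]
        omega
  constructor
  · -- searcher strategy
    refine ⟨fun A => ∑ j ∈ Finset.Icc (m + 1) n, if A = Aset j then c j else 0, ?_, ?_, ?_⟩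
    · intro A
      apply Finset.sum_nonneg
      intro j hj
      split
      · exact hc0 j hj
      · exact le_refl 0
    · rw [Finset.sum_comm]
      rw [← hcsum]
      apply Finset.sum_congr rfl
      intro j hj
      rw [Finset.sum_ite_eq' (feasibleSets n n) (Aset j) (fun _ => c j)]
      simp [hAfeas j hj]
    · intro i hi
      simp only [Finset.mem_Icc] at hi
      rw [Finset.sum_comm]
      set j₀ : ℕ := if i ≤ m then n - i else i with hj₀
      have hj₀mem : j₀ ∈ Finset.Icc (m + 1) n := by
        simp only [Finset.mem_Icc, hj₀]
        split <;> omega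
      have hij₀ : i ∈ Aset j₀ := by
        rw [hmemA]
        constructor
        · omega
        · rw [hj₀]; split
          · right; omega
          · left; rfl
      have key : ∀ j ∈ Finset.Icc (m + 1) n,
          (∑ A ∈ (feasibleSets n n).filter (fun A => i ∈ A), if A = Aset j then c j else 0)
          = if i ∈ Aset j then c j else 0 := by
        intro j hj
        rw [Finset.sum_ite_eq' _ (Aset j) (fun _ => c j)]
        simp only [Finset.mem_filter]
        by_cases hiA : i ∈ Aset j
        · simp [hiA, hAfeas j hj]
        · simp [hiA]
      rw [Finset.sum_congr rfl key]
      have hlow : c j₀ ≤ ∑ j ∈ Finset.Icc (m + 1) n, if i ∈ Aset j then c j else 0 := by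
        have := Finset.single_le_sum (f := fun j => if i ∈ Aset j then c j else 0)
          (fun j hj => by split; exacts [hc0 j hj, le_refl 0]) hj₀mem
        simpa [hij₀] using this
      have hpi : 0 < p i := hpos i (by simp only [Finset.mem_Icc]; omega)
      have hpj₀ : 0 < p j₀ := hposm j₀ hj₀mem
      have hple2 : p j₀ ≤ p i := by
        apply hmono i j₀ hi.1
        · rw [hj₀]; split <;> omega
        · simp only [Finset.mem_Icc] at hj₀mem; exact hj₀mem.2
      calc 1 / S = S⁻¹ * 1 := by rw [one_div, mul_one]
        _ ≤ S⁻¹ * (p i / p j₀) := by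
            have h1 : (1:ℝ) ≤ p i / p j₀ := (one_le_div hpj₀).mpr hple2
            exact mul_le_mul_of_nonneg_left h1 (le_of_lt (inv_pos.mpr hS0))
        _ = c j₀ * p i := by rw [hc, div_eq_mul_inv]; ring
        _ ≤ (∑ j ∈ Finset.Icc (m + 1) n, if i ∈ Aset j then c j else 0) * p i :=
            mul_le_mul_of_nonneg_right hlow (le_of_lt hpi)
  · -- hider strategy
    refine ⟨fun i => if i ∈ Finset.Icc (m + 1) n then c i else 0, ?_, ?_, ?_⟩
    · intro i
      dsimp only
      split
      · exact hc0 i (by assumption)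
      · exact le_refl 0
    · rw [← Finset.sum_filter]
      have : (Finset.Icc 1 n).filter (fun i => i ∈ Finset.Icc (m + 1) n)
          = Finset.Icc (m + 1) n := by
        rw [Finset.filter_mem_eq_inter, Finset.inter_eq_right]
        exact hsub
      rw [this, hcsum]
    · intro A hA
      rw [feasibleSets, Finset.mem_filter, Finset.mem_powerset] at hA
      have hterm : ∀ i ∈ A,
          (if i ∈ Finset.Icc (m + 1) n then c i else 0) * p i
          = if i ∈ Finset.Icc (m + 1) n then S⁻¹ else 0 := by
        intro i hi
        have hpi : p i ≠ 0 := ne_of_gt (hpos i (hA.1 hi))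
        split
        · rw [hc]; field_simp
        · rw [zero_mul]
      rw [Finset.sum_congr rfl hterm, ← Finset.sum_filter]
      have hcard : (A.filter (fun i => i ∈ Finset.Icc (m + 1) n)).card ≤ 1 := by
        rw [Finset.card_le_one]
        intro a ha b hb
        simp only [Finset.mem_filter, Finset.mem_Icc] at ha hb
        by_contra hab
        have hsub2 : ({a, b} : Finset ℕ) ⊆ A := by
          intro z hz
          simp only [Finset.mem_insert, Finset.mem_singleton] at hz
          rcases hz with rfl | rfl
          exacts [ha.1, hb.1]
        have : a + b ≤ ∑ i ∈ A, i := by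
          have h2 := Finset.sum_le_sum_of_subset (f := fun i => i) hsub2
          rwa [Finset.sum_pair hab] at h2
        omega
      rw [Finset.sum_const, one_div]
      calc (A.filter (fun i => i ∈ Finset.Icc (m + 1) n)).card • S⁻¹
          ≤ 1 • S⁻¹ := by
            apply smul_le_smul_of_nonneg_right _ (le_of_lt (inv_pos.mpr hS0))
            exact_mod_cast hcard
        _ = S⁻¹ := one_smul _ _
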